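/- Define f(x) = Σ_{t=0}^{N−1} (1 − (1−x)^{N−t−1})·(1 − (1−x)^t) for 0 < x < 1. For every integer N ≥ 500 and every real x with 1/N ≤ x < 1, one has f(x) ≥ N/10. -/

import Mathlib

/-- The bilinear sum arising from the variance term of iterate-averaged SGD:
`f(x) = Σ_{t=0}^{N−1} (1 − (1−x)^{N−t−1})(1 − (1−x)^t)`. -/
noncomputable def varSum (N : ℕ) (x : ℝ) : ℝ :=
  ∑ t ∈ Finset.range N, (1 - (1 - x) ^ (N - t - 1)) * (1 - (1 - x) ^ t)

lemma aux_exp_pow (m : ℕ) (hm : 0 < m) :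
    Real.exp (-1) ≤ ((m : ℝ) / ((m : ℝ) + 1)) ^ m := by
  have hm' : (0:ℝ) < m := by exact_mod_cast hm
  have hq : (0:ℝ) < (m : ℝ) / ((m : ℝ) + 1) := by positivity
  have key : Real.exp 1 * ((m : ℝ) / ((m : ℝ) + 1)) ^ m ≥ 1 := by
    have h1 : (1 + 1/(m:ℝ)) ≤ Real.exp (1/(m:ℝ)) := by
      have := Real.add_one_le_exp (1/(m:ℝ)); linarith
    have h2 : ((1 + 1/(m:ℝ)))^m ≤ (Real.exp (1/(m:ℝ)))^m :=
      pow_le_pow_left₀ (by positivity) h1 m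
    have h3 : (Real.exp (1/(m:ℝ)))^m = Real.exp 1 := by
      rw [← Real.exp_nat_mul]
      congr 1
      field_simp
    have h4 : ((1 + 1/(m:ℝ)))^m * ((m : ℝ) / ((m : ℝ) + 1)) ^ m = 1 := by
      rw [← mul_pow]
      have : (1 + 1/(m:ℝ)) * ((m : ℝ) / ((m : ℝ) + 1)) = 1 := by
        field_simp
      rw [this, one_pow]
    calc (1:ℝ) = ((1 + 1/(m:ℝ)))^m * ((m : ℝ) / ((m : ℝ) + 1)) ^ m := h4.symm
      _ ≤ (Real.exp (1/(m:ℝ)))^m * ((m : ℝ) / ((m : ℝ) + 1)) ^ m := by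
          apply mul_le_mul_of_nonneg_right h2 (by positivity)
      _ = Real.exp 1 * ((m : ℝ) / ((m : ℝ) + 1)) ^ m := by rw [h3]
  have hepos : (0:ℝ) < Real.exp 1 := Real.exp_pos 1
  rw [Real.exp_neg]
  rw [inv_le_iff_one_le_mul₀ hepos] at *
  linarith [key]

/-- For `N ≥ 500` and `1/N ≤ x < 1`: `f(x) ≥ N/10`. -/
theorem varSum_lower_large_x (N : ℕ) (hN : 500 ≤ N) (x : ℝ)
    (hx0 : 0 < x) (hx1 : x < 1) (hx : 1 / (N : ℝ) ≤ x) :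
    (N : ℝ) / 10 ≤ varSum N x := by
  have hN500 : (500:ℝ) ≤ N := by exact_mod_cast hN
  have hNpos : (0:ℝ) < N := by linarith
  set q : ℝ := 1 - 1/(N:ℝ) with hqdef
  have h1N : 1/(N:ℝ) ≤ 1 := by
    rw [div_le_one hNpos]; linarith
  have h1N0 : 0 < 1/(N:ℝ) := by positivity
  have hq0 : 0 ≤ q := by rw [hqdef]; linarith
  have hq1 : q < 1 := by rw [hqdef]; linarith
  have hp0 : 0 ≤ 1 - x := by linarith
  have hpq : 1 - x ≤ q := by rw [hqdef]; linarith
  -- Step 1: monotonicity, reduce to x = 1/N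
  have hmono : varSum N (1/(N:ℝ)) ≤ varSum N x := by
    unfold varSum
    apply Finset.sum_le_sum
    intro t _
    have h1x1 : 1 - x ≤ 1 := by linarith
    have hq1' : q ≤ 1 := le_of_lt hq1
    have hA : ∀ k : ℕ, (1 - x) ^ k ≤ q ^ k := fun k => pow_le_pow_left₀ hp0 hpq k
    have hB : ∀ k : ℕ, q ^ k ≤ 1 := fun k => pow_le_one₀ hq0 hq1'
    have hC : ∀ k : ℕ, (1 - x) ^ k ≤ 1 := fun k => pow_le_one₀ hp0 h1x1
    have e1 : (1:ℝ) - 1/(N:ℝ) = q := rfl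
    rw [show (1:ℝ) - 1/(N:ℝ) = q from rfl]
    apply mul_le_mul
    · linarith [hA (N - t - 1)]
    · linarith [hA t]
    · linarith [hB t]
    · linarith [hC (N - t - 1)]
  refine le_trans ?_ hmono
  -- Step 2: closed form at x = 1/N
  have hNne : N ≠ 0 := by omega
  have hcf : varSum N (1/(N:ℝ)) = (N:ℝ) * (q ^ (N-1) + 2 * q ^ N - 1) := by
    unfold varSum
    rw [show (1:ℝ) - 1/(N:ℝ) = q from rfl]
    have expand : ∀ t ∈ Finset.range N,
        (1 - q ^ (N - t - 1)) * (1 - q ^ t)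
          = 1 - q ^ (N - 1 - t) - q ^ t + q ^ (N-1) := by
      intro t ht
      rw [Finset.mem_range] at ht
      have h1 : N - t - 1 = N - 1 - t := by omega
      have h2 : q ^ (N - 1 - t) * q ^ t = q ^ (N - 1) := by
        rw [← pow_add]
        congr 1
        omega
      rw [h1]; linear_combination h2
    rw [Finset.sum_congr rfl expand]
    have hrefl : ∑ t ∈ Finset.range N, q ^ (N - 1 - t) = ∑ t ∈ Finset.range N, q ^ t :=
      Finset.sum_range_reflect (fun t => q ^ t) N
    have hqne : q ≠ 1 := ne_of_lt hq1
    have hgeom : ∑ t ∈ Finset.range N, q ^ t = (N:ℝ) * (1 - q ^ N) := by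
      rw [geom_sum_eq hqne, hqdef]
      have hNne' : (N:ℝ) ≠ 0 := ne_of_gt hNpos
      field_simp
      ring
    simp only [Finset.sum_add_distrib, Finset.sum_sub_distrib, Finset.sum_const,
      Finset.card_range, nsmul_eq_mul]
    rw [hrefl, hgeom]
    ring
  rw [hcf]
  -- Step 3: numeric bound
  have hm : N - 1 ≥ 499 := by omega
  have hmpos : 0 < N - 1 := by omega
  have hcast : ((N - 1 : ℕ) : ℝ) = (N:ℝ) - 1 := by
    have : 1 ≤ N := by omega
    push_cast [this]; ring
  have hqeq : q = ((N-1:ℕ):ℝ) / (((N-1:ℕ):ℝ) + 1) := by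
    rw [hcast]
    rw [hqdef, sub_add_cancel, sub_div, div_self (ne_of_gt hNpos)]
  have hkey : Real.exp (-1) ≤ q ^ (N - 1) := by
    rw [hqeq]
    exact aux_exp_pow (N-1) hmpos
  have hqN : q ^ N = q ^ (N-1) * q := by
    rw [← pow_succ]
    congr 1
    omega
  have hqlb : (499:ℝ)/500 ≤ q := by
    have h500 : (500:ℝ) ≤ N := by exact_mod_cast hN
    have h1 : 1/(N:ℝ) ≤ 1/500 := one_div_le_one_div_of_le (by norm_num) h500
    rw [hqdef]; linarith
  have hexplb : (0.3678:ℝ) ≤ Real.exp (-1) := by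
    rw [Real.exp_neg]
    rw [le_inv_comm₀ (by norm_num) (Real.exp_pos 1)]
    calc Real.exp 1 ≤ 2.7182818286 := le_of_lt Real.exp_one_lt_d9
      _ ≤ (0.3678:ℝ)⁻¹ := by norm_num
  have hterm : (11:ℝ)/10 ≤ q ^ (N-1) + 2 * q ^ N := by
    rw [hqN]
    have h1 : q ^ (N-1) * (1 + 2*q) ≥ 0.3678 * (1 + 2*(499/500)) := by
      apply mul_le_mul (by linarith [hkey, hexplb]) (by linarith) (by norm_num)
        (by positivity)
    nlinarith
  nlinarith [hterm, hNpos]
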